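/- Let n1, n2, n3 be positive integers, set m = max{n1, n2, n3}, n = median{n1, n2, n3}, k = min{n1, n2, n3}, and let P be a real number with P ≥ mn/k² (and P ≥ 1). If F is a finite set of triples (i1, i2, i3) with 1 ≤ i1 ≤ n1, 1 ≤ i2 ≤ n2, 1 ≤ i3 ≤ n3 and |F| ≥ n1·n2·n3 / P, then |φ_A(F)| + |φ_B(F)| + |φ_C(F)| ≥ 3·(mnk/P)^{2/3}. -/
import Mathlib

open Finset

lemma loomis_whitney (F : Finset (ℕ × ℕ × ℕ)) :
    (F.card : ℝ) ^ 2 ≤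
      ((F.image fun t => (t.1, t.2.1)).card : ℝ) *
        (F.image fun t => (t.2.1, t.2.2)).card *
        (F.image fun t => (t.1, t.2.2)).card := by
  classical
  set A := F.image fun t => (t.1, t.2.1) with hA
  set B := F.image fun t => (t.2.1, t.2.2) with hB
  set C := F.image fun t => (t.1, t.2.2) with hC
  set Z := F.image fun t => t.2.2 with hZ
  have hFcard : F.card = ∑ z ∈ Z, (F.filter fun t => t.2.2 = z).card :=
    card_eq_sum_card_fiberwise fun t ht => mem_image_of_mem _ ht
  have hBcard : B.card = ∑ z ∈ Z, (B.filter fun b => b.2 = z).card := by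
    refine card_eq_sum_card_fiberwise fun b hb => ?_
    obtain ⟨t, ht, rfl⟩ := mem_image.1 hb
    exact mem_image_of_mem _ ht
  have hCcard : C.card = ∑ z ∈ Z, (C.filter fun c => c.2 = z).card := by
    refine card_eq_sum_card_fiberwise fun c hc => ?_
    obtain ⟨t, ht, rfl⟩ := mem_image.1 hc
    exact mem_image_of_mem _ ht
  have key : ∀ z, ((F.filter fun t => t.2.2 = z).card : ℝ) ≤
      Real.sqrt A.card * (Real.sqrt (B.filter fun b => b.2 = z).card *
        Real.sqrt (C.filter fun c => c.2 = z).card) := by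
    intro z
    have h1 : (F.filter fun t => t.2.2 = z).card ≤ A.card := by
      apply card_le_card_of_injOn (fun t => (t.1, t.2.1))
      · intro t ht
        exact mem_image_of_mem _ (mem_filter.1 ht).1
      · intro t ht s hs h
        have ht2 := (mem_filter.1 ht).2
        have hs2 := (mem_filter.1 hs).2
        have h' : (t.1, t.2.1) = (s.1, s.2.1) := h
        obtain ⟨h1, h2⟩ := Prod.mk.inj h'
        exact Prod.ext h1 (Prod.ext h2 (ht2.trans hs2.symm))
    have h2 : (F.filter fun t => t.2.2 = z).card ≤
        (B.filter fun b => b.2 = z).card * (C.filter fun c => c.2 = z).card := by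
      rw [← card_product]
      apply card_le_card_of_injOn (fun t => ((t.2.1, t.2.2), (t.1, t.2.2)))
      · intro t ht
        obtain ⟨htF, htz⟩ := mem_filter.1 ht
        exact mem_product.2 ⟨mem_filter.2 ⟨mem_image_of_mem _ htF, htz⟩,
          mem_filter.2 ⟨mem_image_of_mem _ htF, htz⟩⟩
      · intro t _ s _ h
        have h' : ((t.2.1, t.2.2), (t.1, t.2.2)) = ((s.2.1, s.2.2), (s.1, s.2.2)) := h
        obtain ⟨hbc, hac⟩ := Prod.mk.inj h'
        obtain ⟨e1, e2⟩ := Prod.mk.inj hbc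
        obtain ⟨e3, _⟩ := Prod.mk.inj hac
        exact Prod.ext e3 (Prod.ext e1 e2)
    have hsq : ((F.filter fun t => t.2.2 = z).card : ℝ) ^ 2 ≤
        (A.card : ℝ) * ((B.filter fun b => b.2 = z).card *
          (C.filter fun c => c.2 = z).card) := by
      have := Nat.mul_le_mul h1 h2
      push_cast
      calc ((F.filter fun t => t.2.2 = z).card : ℝ) ^ 2
          = ((F.filter fun t => t.2.2 = z).card : ℝ) *
            ((F.filter fun t => t.2.2 = z).card : ℝ) := sq _
        _ ≤ _ := by exact_mod_cast this
    calc ((F.filter fun t => t.2.2 = z).card : ℝ)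
        ≤ Real.sqrt ((A.card : ℝ) * ((B.filter fun b => b.2 = z).card *
            (C.filter fun c => c.2 = z).card)) := Real.le_sqrt_of_sq_le hsq
      _ = _ := by
          rw [Real.sqrt_mul (by positivity), Real.sqrt_mul (by positivity)]
  have step1 : (F.card : ℝ) ≤ Real.sqrt A.card *
      ∑ z ∈ Z, Real.sqrt (B.filter fun b => b.2 = z).card *
        Real.sqrt (C.filter fun c => c.2 = z).card := by
    rw [hFcard]
    push_cast
    rw [Finset.mul_sum]
    exact Finset.sum_le_sum fun z _ => key z
  have step2 : ∑ z ∈ Z, Real.sqrt (B.filter fun b => b.2 = z).card *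
      Real.sqrt (C.filter fun c => c.2 = z).card ≤
      Real.sqrt B.card * Real.sqrt C.card := by
    have := Real.sum_sqrt_mul_sqrt_le Z
      (f := fun z => ((B.filter fun b => b.2 = z).card : ℝ))
      (g := fun z => ((C.filter fun c => c.2 = z).card : ℝ))
      (fun z => by positivity) (fun z => by positivity)
    calc _ ≤ Real.sqrt (∑ z ∈ Z, ((B.filter fun b => b.2 = z).card : ℝ)) *
          Real.sqrt (∑ z ∈ Z, ((C.filter fun c => c.2 = z).card : ℝ)) := this
      _ = _ := by rw [← Nat.cast_sum, ← Nat.cast_sum, ← hBcard, ← hCcard]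
  have hle : (F.card : ℝ) ≤ Real.sqrt A.card * Real.sqrt B.card * Real.sqrt C.card := by
    calc (F.card : ℝ) ≤ _ := step1
      _ ≤ Real.sqrt A.card * (Real.sqrt B.card * Real.sqrt C.card) := by
          apply mul_le_mul_of_nonneg_left step2 (Real.sqrt_nonneg _)
      _ = _ := by ring
  calc (F.card : ℝ) ^ 2 ≤ (Real.sqrt A.card * Real.sqrt B.card * Real.sqrt C.card) ^ 2 := by
        apply pow_le_pow_left₀ (by positivity) hle
    _ = _ := by
        rw [mul_pow, mul_pow, Real.sq_sqrt (by positivity), Real.sq_sqrt (by positivity),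
          Real.sq_sqrt (by positivity)]

lemma prod_sorted (n1 n2 n3 m n k : ℕ)
    (hm : m = max n1 (max n2 n3)) (hk : k = min n1 (min n2 n3))
    (hn : n = n1 + n2 + n3 - m - k) : m * n * k = n1 * n2 * n3 := by
  rcases le_total n1 n2 with h12 | h12 <;> rcases le_total n2 n3 with h23 | h23 <;>
    rcases le_total n1 n3 with h13 | h13
  · rw [show m = n3 from by omega, show k = n1 from by omega, show n = n2 from by omega] <;> ring
  · rw [show m = n3 from by omega, show k = n1 from by omega, show n = n2 from by omega] <;> ring
  · rw [show m = n2 from by omega, show k = n1 from by omega, show n = n3 from by omega] <;> ring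
  · rw [show m = n2 from by omega, show k = n3 from by omega, show n = n1 from by omega] <;> ring
  · rw [show m = n3 from by omega, show k = n2 from by omega, show n = n1 from by omega] <;> ring
  · rw [show m = n1 from by omega, show k = n2 from by omega, show n = n3 from by omega] <;> ring
  · rw [show m = n1 from by omega, show k = n3 from by omega, show n = n2 from by omega] <;> ring
  · rw [show m = n1 from by omega, show k = n3 from by omega, show n = n2 from by omega] <;> ring


/-- Data-access lower bound, case 3 (`P ≥ mn/k²`, `P ≥ 1`): if a processor is
assigned a set `F` of at least `n₁n₂n₃/P` lattice points of the matrix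
multiplication iteration space, then the total size of the three projections
of `F` is at least `3(mnk/P)^{2/3}`, where `m ≥ n ≥ k` are the sorted
dimensions. -/
theorem stmt_9 (n1 n2 n3 : ℕ) (hn1 : 0 < n1) (hn2 : 0 < n2) (hn3 : 0 < n3)
    (m n k : ℕ)
    (hm : m = max n1 (max n2 n3)) (hk : k = min n1 (min n2 n3))
    (hn : n = n1 + n2 + n3 - m - k)
    (P : ℝ) (hP1 : 1 ≤ P) (hP2 : (m : ℝ) * n / (k : ℝ) ^ 2 ≤ P)
    (F : Finset (ℕ × ℕ × ℕ))
    (hF : ∀ t ∈ F, (1 ≤ t.1 ∧ t.1 ≤ n1) ∧ (1 ≤ t.2.1 ∧ t.2.1 ≤ n2) ∧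
      (1 ≤ t.2.2 ∧ t.2.2 ≤ n3))
    (hcard : (n1 * n2 * n3 : ℝ) / P ≤ F.card) :
    3 * ((m : ℝ) * n * k / P) ^ ((2 : ℝ) / 3) ≤
      ((F.image fun t => (t.1, t.2.1)).card : ℝ) +
        (F.image fun t => (t.2.1, t.2.2)).card +
        (F.image fun t => (t.1, t.2.2)).card := by
  have hP0 : (0 : ℝ) < P := lt_of_lt_of_le one_pos hP1
  have hmnk : ((m : ℝ) * n * k) = (n1 : ℝ) * n2 * n3 := by
    have := prod_sorted n1 n2 n3 m n k hm hk hn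
    exact_mod_cast congrArg (Nat.cast : ℕ → ℝ) this
  set A : ℝ := ((F.image fun t => (t.1, t.2.1)).card : ℝ) with hAdef
  set B : ℝ := ((F.image fun t => (t.2.1, t.2.2)).card : ℝ) with hBdef
  set C : ℝ := ((F.image fun t => (t.1, t.2.2)).card : ℝ) with hCdef
  have hA0 : 0 ≤ A := Nat.cast_nonneg _
  have hB0 : 0 ≤ B := Nat.cast_nonneg _
  have hC0 : 0 ≤ C := Nat.cast_nonneg _
  set x : ℝ := (m : ℝ) * n * k / P with hxdef
  have hx0 : 0 ≤ x := by
    apply div_nonneg _ hP0.le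
    positivity
  have hxF : x ≤ (F.card : ℝ) := by
    rw [hxdef, hmnk]; exact hcard
  have hLW : (F.card : ℝ) ^ 2 ≤ A * B * C := loomis_whitney F
  have hx2 : x ^ 2 ≤ A * B * C := by
    calc x ^ 2 ≤ ((F.card : ℝ)) ^ 2 := pow_le_pow_left₀ hx0 hxF 2
      _ ≤ A * B * C := hLW
  have key : x ^ ((2 : ℝ) / 3) ≤ A ^ ((1:ℝ)/3) * B ^ ((1:ℝ)/3) * C ^ ((1:ℝ)/3) := by
    have e1 : x ^ ((2 : ℝ) / 3) = (x ^ 2) ^ ((1:ℝ)/3) := by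
      rw [← Real.rpow_natCast x 2, ← Real.rpow_mul hx0]
      norm_num
    rw [e1]
    calc (x ^ 2) ^ ((1:ℝ)/3) ≤ (A * B * C) ^ ((1:ℝ)/3) :=
          Real.rpow_le_rpow (sq_nonneg x) hx2 (by norm_num)
      _ = A ^ ((1:ℝ)/3) * B ^ ((1:ℝ)/3) * C ^ ((1:ℝ)/3) := by
          rw [Real.mul_rpow (by positivity) hC0, Real.mul_rpow hA0 hB0]
  have hgm : A ^ ((1:ℝ)/3) * B ^ ((1:ℝ)/3) * C ^ ((1:ℝ)/3) ≤
      (1/3) * A + (1/3) * B + (1/3) * C :=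
    Real.geom_mean_le_arith_mean3_weighted (by norm_num) (by norm_num) (by norm_num)
      hA0 hB0 hC0 (by norm_num)
  linarith
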